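/- For all positive integers n, m and real q with 0 < q < 1: ∑_{k=1}^n q^k/[k]_q^m = ∑_{n ≥ k_1 ≥ ⋯ ≥ k_m ≥ 1} (-1)^{k_1+1} q^{k_1(k_1+1)/2} C_q(n,k_1) ∏_{j=1}^m 1/[k_j]_q. -/

import Mathlib

/-- Gaussian binomial coefficient, vanishing unless `k ≤ n`. -/
noncomputable def qbinom (q : ℝ) (n k : ℕ) : ℝ :=
  if k ≤ n then ∏ j ∈ Finset.Icc 1 k, (1 - q ^ (n - k + j)) / (1 - q ^ j) else 0

/-- The `q`-analog of a natural number: `[k]_q = (1-q^k)/(1-q)`. -/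
noncomputable def qnum (q : ℝ) (k : ℕ) : ℝ := (1 - q ^ k) / (1 - q)

/-- `∑_{n ≥ k₁ ≥ ⋯ ≥ k_m ≥ 1} ∏_j 1/[k_j]_q`. -/
noncomputable def nestedInvQ (q : ℝ) : ℕ → ℕ → ℝ
  | _, 0 => 1
  | n, m + 1 => ∑ k ∈ Finset.Icc 1 n, (1 / qnum q k) * nestedInvQ q k m

open Finset

namespace QK

noncomputable def qnumer (q : ℝ) (n k : ℕ) : ℝ := ∏ i ∈ range k, (1 - q ^ (n - k + 1 + i))
noncomputable def qdenom (q : ℝ) (k : ℕ) : ℝ := ∏ i ∈ range k, (1 - q ^ (i + 1))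

variable {q : ℝ}

lemma Icc_one_prod (f : ℕ → ℝ) (k : ℕ) : ∏ j ∈ Icc 1 k, f j = ∏ i ∈ range k, f (1+i) := by
  rw [← Finset.Ico_add_one_right_eq_Icc, Finset.prod_Ico_eq_prod_range]
  rw [show k + 1 - 1 = k from by omega]

lemma qbinom_eq {n k : ℕ} (h : k ≤ n) :
    qbinom q n k = qnumer q n k / qdenom q k := by
  unfold qbinom qnumer qdenom
  rw [if_pos h, Finset.prod_div_distrib]
  congr 1
  · rw [Icc_one_prod]
    exact Finset.prod_congr rfl fun i _ => by rw [show n-k+(1+i) = n-k+1+i from by omega]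
  · rw [Icc_one_prod]
    exact Finset.prod_congr rfl fun i _ => by rw [show 1+i = i+1 from by omega]

lemma one_sub_pow_pos (hq0 : 0 < q) (hq1 : q < 1) {j : ℕ} (hj : j ≠ 0) :
    0 < 1 - q ^ j := by
  have := pow_lt_one₀ hq0.le hq1 hj
  linarith

lemma qdenom_pos (hq0 : 0 < q) (hq1 : q < 1) (k : ℕ) : 0 < qdenom q k :=
  Finset.prod_pos fun i _ => one_sub_pow_pos hq0 hq1 (by omega)

lemma qnumer_pos (hq0 : 0 < q) (hq1 : q < 1) (n k : ℕ) : 0 < qnumer q n k :=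
  Finset.prod_pos fun i _ => one_sub_pow_pos hq0 hq1 (by omega)

lemma qnum_one (hq1 : q < 1) : qnum q 1 = 1 := by
  unfold qnum
  rw [pow_one]
  exact div_self (by linarith)

lemma qnum_pos (hq0 : 0 < q) (hq1 : q < 1) {k : ℕ} (hk : k ≠ 0) : 0 < qnum q k :=
  div_pos (one_sub_pow_pos hq0 hq1 hk) (by linarith)

lemma qbinom_zero (n : ℕ) : qbinom q n 0 = 1 := by
  unfold qbinom; simp

lemma qbinom_self (hq0 : 0 < q) (hq1 : q < 1) (n : ℕ) : qbinom q n n = 1 := by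
  rw [qbinom_eq le_rfl]
  have h : qnumer q n n = qdenom q n := by
    unfold qnumer qdenom
    exact Finset.prod_congr rfl fun i _ => by rw [show n-n+1+i = i+1 from by omega]
  rw [h]
  exact div_self (qdenom_pos hq0 hq1 n).ne'

lemma qbinom_of_lt {n k : ℕ} (h : n < k) : qbinom q n k = 0 := by
  unfold qbinom; rw [if_neg (by omega)]

lemma qnumer_top {n k : ℕ} (h : k ≤ n) :
    qnumer q (n+1) (k+1) = qnumer q n k * (1 - q ^ (n+1)) := by
  unfold qnumer
  rw [Finset.prod_range_succ]
  congr 1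
  · exact Finset.prod_congr rfl fun i _ => by rw [show (n+1)-(k+1)+1+i = n-k+1+i from by omega]
  · rw [show (n+1)-(k+1)+1+k = n+1 from by omega]

lemma qnumer_bot {n k : ℕ} (h : k < n) :
    qnumer q n (k+1) = qnumer q n k * (1 - q ^ (n - k)) := by
  unfold qnumer
  rw [Finset.prod_range_succ']
  congr 1
  · exact Finset.prod_congr rfl fun i _ => by rw [show n-(k+1)+1+(i+1) = n-k+1+i from by omega]
  · rw [show n-(k+1)+1+0 = n-k from by omega]

lemma qdenom_succ (k : ℕ) : qdenom q (k+1) = qdenom q k * (1 - q ^ (k+1)) := by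
  unfold qdenom; rw [Finset.prod_range_succ]

/-- q-Pascal, form 1 -/
lemma pascal1 (hq0 : 0 < q) (hq1 : q < 1) {n k : ℕ} (h : k ≤ n) :
    qbinom q (n+1) (k+1) = qbinom q n (k+1) + q ^ (n - k) * qbinom q n k := by
  rcases eq_or_lt_of_le h with rfl | hlt
  · rw [qbinom_self hq0 hq1, qbinom_self hq0 hq1, qbinom_of_lt (by omega)]
    simp
  · rw [qbinom_eq (by omega), qbinom_eq (by omega), qbinom_eq (by omega),
      qnumer_top h, qnumer_bot hlt, qdenom_succ,
      show (q:ℝ)^(n+1) = q^(n-k) * q^(k+1) from by rw [← pow_add]; congr 1; omega]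
    have hd := (qdenom_pos hq0 hq1 k).ne'
    have hk1 : (1 : ℝ) - q ^ (k+1) ≠ 0 := (one_sub_pow_pos hq0 hq1 (by omega)).ne'
    field_simp
    ring

/-- q-Pascal, form 2 -/
lemma pascal2 (hq0 : 0 < q) (hq1 : q < 1) {n k : ℕ} (h : k ≤ n) :
    qbinom q (n+1) (k+1) = q ^ (k+1) * qbinom q n (k+1) + qbinom q n k := by
  rcases eq_or_lt_of_le h with rfl | hlt
  · rw [qbinom_self hq0 hq1, qbinom_self hq0 hq1, qbinom_of_lt (by omega)]
    simp
  · rw [qbinom_eq (by omega), qbinom_eq (by omega), qbinom_eq (by omega),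
      qnumer_top h, qnumer_bot hlt, qdenom_succ,
      show (q:ℝ)^(n+1) = q^(n-k) * q^(k+1) from by rw [← pow_add]; congr 1; omega]
    have hd := (qdenom_pos hq0 hq1 k).ne'
    have hk1 : (1 : ℝ) - q ^ (k+1) ≠ 0 := (one_sub_pow_pos hq0 hq1 (by omega)).ne'
    field_simp
    ring

/-- absorption -/
lemma absorb (hq0 : 0 < q) (hq1 : q < 1) {n k : ℕ} (h : k ≤ n) :
    (1 - q ^ (n+1)) * qbinom q n k = (1 - q ^ (k+1)) * qbinom q (n+1) (k+1) := by
  rw [qbinom_eq h, qbinom_eq (by omega), qnumer_top h, qdenom_succ]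
  have hd := (qdenom_pos hq0 hq1 k).ne'
  have hk1 : (1 : ℝ) - q ^ (k+1) ≠ 0 := (one_sub_pow_pos hq0 hq1 (by omega)).ne'
  field_simp

lemma tri_succ (k : ℕ) (hk : 1 ≤ k) : k*(k+1)/2 = k*(k-1)/2 + k := by
  obtain ⟨p, rfl⟩ : ∃ p, k = p + 1 := ⟨k - 1, by omega⟩
  have h1 : (p+1)*(p+1+1) = (p+1)*p + 2*(p+1) := by ring
  have h2 : Even ((p+1)*p) := by rw [Nat.mul_comm]; exact Nat.even_mul_succ_self p
  obtain ⟨c, hc⟩ := h2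
  rw [show p+1-1 = p from by omega]
  omega

lemma Dsum (hq0 : 0 < q) (hq1 : q < 1) :
    ∀ d j n : ℕ, j + d = n + 1 → 1 ≤ j →
    ∑ k ∈ Icc j (n+1), (-1:ℝ)^(k+1) * q^(k*(k-1)/2) * qbinom q (n+1) k
      = (-1:ℝ)^(j+1) * q^(j*(j-1)/2) * qbinom q n (j-1) := by
  intro d
  induction d with
  | zero =>
    intro j n hd hj
    have hjn : j = n + 1 := by omega
    subst hjn
    rw [Finset.Icc_self, Finset.sum_singleton, qbinom_self hq0 hq1,
      show n+1-1 = n from by omega, qbinom_self hq0 hq1]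
  | succ d ih =>
    intro j n hd hj
    have hmem : j ∈ Icc j (n+1) := by simp; omega
    rw [← Finset.add_sum_erase _ _ hmem, Finset.Icc_erase_left, ← Finset.Icc_add_one_left_eq_Ioc,
      ih (j+1) n (by omega) (by omega)]
    obtain ⟨i, rfl⟩ : ∃ i, j = i + 1 := ⟨j - 1, by omega⟩
    rw [show i+1-1 = i from by omega, show i+1+1-1 = i+1 from by omega,
      pascal2 hq0 hq1 (by omega : i ≤ n)]
    have htri := tri_succ (i+1) (by omega)
    rw [show i+1-1 = i from by omega] at htri
    rw [show (i+1+1)*(i+1)/2 = (i+1)*i/2 + (i+1) from by rw [Nat.mul_comm]; omega,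
      pow_add, show ((-1:ℝ))^(i+1+1+1) = -(-1:ℝ)^(i+1+1) from by rw [pow_succ]; ring]
    ring

end QK

namespace QK

lemma absorb' (hq0 : 0 < q) (hq1 : q < 1) {n i : ℕ} (h : i ≤ n) :
    (1 / qnum q (i+1)) * qbinom q n i = (1 / qnum q (n+1)) * qbinom q (n+1) (i+1) := by
  have h1 : (1:ℝ) - q ^ (i+1) ≠ 0 := (one_sub_pow_pos hq0 hq1 (by omega)).ne'
  have h2 : (1:ℝ) - q ^ (n+1) ≠ 0 := (one_sub_pow_pos hq0 hq1 (by omega)).ne'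
  have h3 : (1:ℝ) - q ≠ 0 := by linarith
  have hab := absorb hq0 hq1 h
  unfold qnum
  field_simp
  linear_combination hab

lemma Hsum (hq0 : 0 < q) (hq1 : q < 1) (r : ℕ) :
    ∀ n : ℕ, ∑ k ∈ Icc 1 (n+1),
        (-1:ℝ)^(k+1) * q^(k*(k-1)/2) * qbinom q (n+1) k * nestedInvQ q k r
      = (1 / qnum q (n+1))^r := by
  induction r with
  | zero =>
    intro n
    have hne : ∀ k : ℕ, nestedInvQ q k 0 = 1 := fun k => rfl
    simp only [hne, mul_one, pow_zero]
    rw [Dsum hq0 hq1 n 1 n (by omega) le_rfl]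
    norm_num [qbinom_zero]
  | succ r ih =>
    intro n
    have hstep : ∀ k : ℕ, nestedInvQ q k (r+1)
        = ∑ j ∈ Icc 1 k, (1 / qnum q j) * nestedInvQ q j r := fun k => rfl
    have e1 : ∑ k ∈ Icc 1 (n+1),
          (-1:ℝ)^(k+1) * q^(k*(k-1)/2) * qbinom q (n+1) k * nestedInvQ q k (r+1)
        = ∑ k ∈ Icc 1 (n+1), ∑ j ∈ Icc 1 k,
          ((-1:ℝ)^(k+1) * q^(k*(k-1)/2) * qbinom q (n+1) k)
            * ((1 / qnum q j) * nestedInvQ q j r) :=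
      Finset.sum_congr rfl fun k _ => by rw [hstep, Finset.mul_sum]
    rw [e1, Finset.sum_comm' (t' := Icc 1 (n+1)) (s' := fun j => Icc j (n+1))
      (fun k j => by simp only [mem_Icc]; omega)]
    have e2 : ∀ j ∈ Icc 1 (n+1),
        ∑ k ∈ Icc j (n+1), ((-1:ℝ)^(k+1) * q^(k*(k-1)/2) * qbinom q (n+1) k)
            * ((1 / qnum q j) * nestedInvQ q j r)
        = (1 / qnum q (n+1)) *
            ((-1:ℝ)^(j+1) * q^(j*(j-1)/2) * qbinom q (n+1) j * nestedInvQ q j r) := by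
      intro j hj
      simp only [mem_Icc] at hj
      rw [← Finset.sum_mul, Dsum hq0 hq1 (n+1-j) j n (by omega) (by omega)]
      obtain ⟨i, rfl⟩ : ∃ i, j = i + 1 := ⟨j - 1, by omega⟩
      simp only [Nat.add_sub_cancel]
      have hab := absorb' hq0 hq1 (show i ≤ n by omega)
      linear_combination ((-1:ℝ)^(i+1+1) * q^((i+1)*i/2) * nestedInvQ q (i+1) r) * hab
    rw [Finset.sum_congr rfl e2, ← Finset.mul_sum, ih n, pow_succ]
    ring

lemma nested_one (hq1 : q < 1) : ∀ r : ℕ, nestedInvQ q 1 r = 1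
  | 0 => rfl
  | (r+1) => by
    show ∑ k ∈ Icc 1 1, (1 / qnum q k) * nestedInvQ q k r = 1
    rw [Finset.Icc_self, Finset.sum_singleton, qnum_one hq1, nested_one hq1 r]
    norm_num

end QK

open QK
theorem qKarl_dual (n m : ℕ) (hn : 0 < n) (hm : 0 < m) (q : ℝ) (hq0 : 0 < q) (hq1 : q < 1) :
    ∑ k ∈ Finset.Icc 1 n, q ^ k / (qnum q k) ^ m
    = ∑ k ∈ Finset.Icc 1 n,
        (-1 : ℝ) ^ (k + 1) * q ^ (k * (k + 1) / 2) * qbinom q n k *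
          ((1 / qnum q k) * nestedInvQ q k (m - 1)) := by
  obtain ⟨p, rfl⟩ : ∃ p, m = p + 1 := ⟨m - 1, by omega⟩
  simp only [Nat.add_sub_cancel]
  induction n, hn using Nat.le_induction with
  | base =>
    rw [Finset.Icc_self, Finset.sum_singleton, Finset.sum_singleton,
      qnum_one hq1, qbinom_self hq0 hq1, nested_one hq1]
    norm_num
  | succ n hn ih =>
    have key : ∀ k ∈ Icc 1 (n+1),
        (-1:ℝ)^(k+1) * q^(k*(k+1)/2) * qbinom q (n+1) k * ((1/qnum q k) * nestedInvQ q k p)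
        = (-1:ℝ)^(k+1) * q^(k*(k+1)/2) * qbinom q n k * ((1/qnum q k) * nestedInvQ q k p)
          + q^(n+1) * ((1/qnum q (n+1)) *
              ((-1:ℝ)^(k+1) * q^(k*(k-1)/2) * qbinom q (n+1) k * nestedInvQ q k p)) := by
      intro k hk
      simp only [mem_Icc] at hk
      obtain ⟨i, rfl⟩ : ∃ i, k = i + 1 := ⟨k - 1, by omega⟩
      have hi : i ≤ n := by omega
      have hZ := pascal1 hq0 hq1 hi
      have hAbs := absorb' hq0 hq1 hi
      simp only [Nat.add_sub_cancel]
      have hT : (q:ℝ)^((i+1)*(i+1+1)/2) = q^((i+1)*i/2) * q^(i+1) := by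
        rw [← pow_add]
        congr 1
        have := tri_succ (i+1) (by omega)
        simp only [Nat.add_sub_cancel] at this
        omega
      have hP : (q:ℝ)^(i+1) * q^(n-i) = q^(n+1) := by
        rw [← pow_add]; congr 1; omega
      rw [hT, ← hP]
      linear_combination
        ((-1:ℝ)^(i+1+1) * q^((i+1)*i/2) * q^(i+1) * nestedInvQ q (i+1) p
            * (1/qnum q (i+1))) * hZ
        + ((-1:ℝ)^(i+1+1) * q^((i+1)*i/2) * q^(i+1) * nestedInvQ q (i+1) p
            * q^(n-i)) * hAbs
    rw [Finset.sum_congr rfl key, Finset.sum_add_distrib]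
    have eA : ∑ k ∈ Icc 1 (n+1),
        (-1:ℝ)^(k+1) * q^(k*(k+1)/2) * qbinom q n k * ((1/qnum q k) * nestedInvQ q k p)
        = ∑ k ∈ Icc 1 n,
        (-1:ℝ)^(k+1) * q^(k*(k+1)/2) * qbinom q n k * ((1/qnum q k) * nestedInvQ q k p) := by
      rw [Finset.sum_Icc_succ_top (by omega), qbinom_of_lt (by omega)]
      ring
    have eB : ∑ k ∈ Icc 1 (n+1), q^(n+1) * ((1/qnum q (n+1)) *
          ((-1:ℝ)^(k+1) * q^(k*(k-1)/2) * qbinom q (n+1) k * nestedInvQ q k p))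
        = q^(n+1) * ((1/qnum q (n+1)) * (1/qnum q (n+1))^p) := by
      rw [← Finset.mul_sum, ← Finset.mul_sum, Hsum hq0 hq1 p n]
    rw [eA, eB, ← ih, Finset.sum_Icc_succ_top (by omega : 1 ≤ n+1)]
    have hx : qnum q (n+1) ≠ 0 := (qnum_pos hq0 hq1 (by omega)).ne'
    congr 1
    rw [one_div, ← pow_succ', inv_pow, ← div_eq_mul_inv]
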